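/- Let X be a real Banach space and 0 < α ≤ 1. Let c : X → ℝ be Fréchet differentiable with derivative α-Hölder continuous on every bounded subset of X, let d : X → ℝ be a continuous convex function, and set h := c − d. Assume h is uniformly continuous on bounded subsets of X and strongly coercive, i.e. h(x)/‖x‖ → +∞ as ‖x‖ → ∞. Then the convex envelope co h is Fréchet differentiable with derivative α-Hölder continuous on every bounded subset of X. -/

import Mathlib

open scoped BigOperators

/-- The convex envelope of a function `h : X → ℝ`, given by the infimum over all
finite convex combinations. -/
noncomputable def convEnv {X : Type*} [NormedAddCommGroup X] [NormedSpace ℝ X]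
    (h : X → ℝ) (x : X) : ℝ :=
  sInf { r : ℝ | ∃ (m : ℕ) (l : Fin m → ℝ) (z : Fin m → X),
    (∀ i, 0 < l i) ∧ ∑ i, l i = 1 ∧ ∑ i, l i • z i = x ∧ ∑ i, l i * h (z i) = r }



namespace StmtAux

variable {X : Type*} [NormedAddCommGroup X] [NormedSpace ℝ X]

def envSet (h : X → ℝ) (x : X) : Set ℝ :=
  { r : ℝ | ∃ (m : ℕ) (l : Fin m → ℝ) (z : Fin m → X),
    (∀ i, 0 < l i) ∧ ∑ i, l i = 1 ∧ ∑ i, l i • z i = x ∧ ∑ i, l i * h (z i) = r }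

lemma convEnv_eq (h : X → ℝ) (x : X) : convEnv h x = sInf (envSet h x) := rfl

lemma self_mem_envSet (h : X → ℝ) (x : X) : h x ∈ envSet h x := by
  refine ⟨1, fun _ => 1, fun _ => x, fun _ => one_pos, ?_, ?_, ?_⟩ <;> simp

lemma envSet_lb {h : X → ℝ} {C : ℝ} (hC : ∀ z, ‖z‖ - C ≤ h z) (x : X) :
    ∀ r ∈ envSet h x, ‖x‖ - C ≤ r := by
  rintro r ⟨m, l, z, hpos, hs1, hsx, rfl⟩
  have h1 : ∀ i, l i * (‖z i‖ - C) ≤ l i * h (z i) := fun i =>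
    mul_le_mul_of_nonneg_left (hC (z i)) (hpos i).le
  calc ‖x‖ - C = ‖∑ i, l i • z i‖ - C := by rw [hsx]
    _ ≤ (∑ i, l i * ‖z i‖) - C := by
        gcongr
        refine (norm_sum_le _ _).trans (le_of_eq ?_)
        refine Finset.sum_congr rfl fun i _ => ?_
        rw [norm_smul, Real.norm_eq_abs, abs_of_pos (hpos i)]
    _ = ∑ i, l i * (‖z i‖ - C) := by
        have : ∑ i, l i * (‖z i‖ - C) = ∑ i, (l i * ‖z i‖ - l i * C) :=
          Finset.sum_congr rfl fun i _ => by ring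
        rw [this, Finset.sum_sub_distrib, ← Finset.sum_mul, hs1, one_mul]
    _ ≤ ∑ i, l i * h (z i) := Finset.sum_le_sum fun i _ => h1 i

lemma envSet_bddBelow {h : X → ℝ} {C : ℝ} (hC : ∀ z, ‖z‖ - C ≤ h z) (x : X) :
    BddBelow (envSet h x) := ⟨‖x‖ - C, fun r hr => envSet_lb hC x r hr⟩

lemma convEnv_le_of_mem {h : X → ℝ} {C : ℝ} (hC : ∀ z, ‖z‖ - C ≤ h z) {x : X} {r : ℝ}
    (hr : r ∈ envSet h x) : convEnv h x ≤ r :=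
  csInf_le (envSet_bddBelow hC x) hr

lemma convEnv_le_self {h : X → ℝ} {C : ℝ} (hC : ∀ z, ‖z‖ - C ≤ h z) (x : X) :
    convEnv h x ≤ h x := convEnv_le_of_mem hC (self_mem_envSet h x)

lemma lb_convEnv {h : X → ℝ} {C : ℝ} (hC : ∀ z, ‖z‖ - C ≤ h z) (x : X) :
    ‖x‖ - C ≤ convEnv h x :=
  le_csInf ⟨h x, self_mem_envSet h x⟩ (envSet_lb hC x)

lemma exists_combo {h : X → ℝ} {C : ℝ} (hC : ∀ z, ‖z‖ - C ≤ h z) (x : X) {ε : ℝ} (hε : 0 < ε) :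
    ∃ (m : ℕ) (l : Fin m → ℝ) (z : Fin m → X),
      (∀ i, 0 < l i) ∧ ∑ i, l i = 1 ∧ ∑ i, l i • z i = x ∧
      ∑ i, l i * h (z i) < convEnv h x + ε := by
  have : sInf (envSet h x) < convEnv h x + ε := by
    rw [← convEnv_eq]; linarith
  obtain ⟨r, hr, hlt⟩ := exists_lt_of_csInf_lt ⟨h x, self_mem_envSet h x⟩ this
  obtain ⟨m, l, z, hpos, hs1, hsx, rfl⟩ := hr
  exact ⟨m, l, z, hpos, hs1, hsx, hlt⟩

end StmtAux

namespace StmtAux2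
open StmtAux
variable {X : Type*} [NormedAddCommGroup X] [NormedSpace ℝ X]

lemma append_mem_envSet {h : X → ℝ} {m n : ℕ} {l : Fin m → ℝ} {z : Fin m → X}
    {l' : Fin n → ℝ} {z' : Fin n → X}
    (hpos : ∀ i, 0 < l i) (hpos' : ∀ i, 0 < l' i)
    (hsum : ∑ i, l i + ∑ i, l' i = 1) :
    (∑ i, l i * h (z i) + ∑ i, l' i * h (z' i)) ∈
      envSet h (∑ i, l i • z i + ∑ i, l' i • z' i) := by
  refine ⟨m + n, Fin.append l l', Fin.append z z', ?_, ?_, ?_, ?_⟩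
  · intro i
    refine Fin.addCases (fun j => ?_) (fun j => ?_) i
    · rw [Fin.append_left]; exact hpos j
    · rw [Fin.append_right]; exact hpos' j
  · rw [Fin.sum_univ_add, ← hsum]
    congr 1
    · exact Finset.sum_congr rfl fun i _ => Fin.append_left l l' i
    · exact Finset.sum_congr rfl fun i _ => Fin.append_right l l' i
  · rw [Fin.sum_univ_add]
    congr 1
    · exact Finset.sum_congr rfl fun i _ => by rw [Fin.append_left, Fin.append_left]
    · exact Finset.sum_congr rfl fun i _ => by rw [Fin.append_right, Fin.append_right]
  · rw [Fin.sum_univ_add]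
    congr 1
    · exact Finset.sum_congr rfl fun i _ => by rw [Fin.append_left, Fin.append_left]
    · exact Finset.sum_congr rfl fun i _ => by rw [Fin.append_right, Fin.append_right]

lemma convEnv_convex2 {h : X → ℝ} {C : ℝ} (hC : ∀ z, ‖z‖ - C ≤ h z)
    {x y : X} {a b : ℝ} (ha : 0 ≤ a) (hb : 0 ≤ b) (hab : a + b = 1) :
    convEnv h (a • x + b • y) ≤ a * convEnv h x + b * convEnv h y := by
  rcases eq_or_lt_of_le ha with rfl | ha'
  · simp only [zero_add] at hab; subst hab; simp
  rcases eq_or_lt_of_le hb with rfl | hb'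
  · simp only [add_zero] at hab; subst hab; simp
  have key : ∀ ε : ℝ, 0 < ε →
      convEnv h (a • x + b • y) ≤ a * convEnv h x + b * convEnv h y + ε := by
    intro ε hε
    obtain ⟨m, l, z, hpos, hs1, hsx, hval⟩ := exists_combo hC x hε
    obtain ⟨n, l', z', hpos', hs1', hsy, hval'⟩ := exists_combo hC y hε
    have hmem := append_mem_envSet (h := h) (l := fun i => a * l i) (z := z)
      (l' := fun i => b * l' i) (z' := z')
      (fun i => mul_pos ha' (hpos i)) (fun i => mul_pos hb' (hpos' i))
      (by rw [← Finset.mul_sum, ← Finset.mul_sum, hs1, hs1']; simpa using hab)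
    have hx' : ∑ i, (a * l i) • z i + ∑ i, (b * l' i) • z' i = a • x + b • y := by
      rw [← hsx, ← hsy, Finset.smul_sum, Finset.smul_sum]
      congr 1 <;> exact Finset.sum_congr rfl fun i _ => by rw [mul_smul]
    rw [hx'] at hmem
    refine (convEnv_le_of_mem hC hmem).trans ?_
    have e1 : ∑ i, a * l i * h (z i) = a * ∑ i, l i * h (z i) := by
      rw [Finset.mul_sum]; exact Finset.sum_congr rfl fun i _ => by ring
    have e2 : ∑ i, b * l' i * h (z' i) = b * ∑ i, l' i * h (z' i) := by
      rw [Finset.mul_sum]; exact Finset.sum_congr rfl fun i _ => by ring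
    rw [e1, e2]
    nlinarith [hval, hval', ha', hb']
  by_contra hcon
  push_neg at hcon
  obtain ⟨ε, hε, hlt⟩ : ∃ ε > 0, a * convEnv h x + b * convEnv h y + ε <
      convEnv h (a • x + b • y) :=
    ⟨(convEnv h (a • x + b • y) - (a * convEnv h x + b * convEnv h y)) / 2,
      by linarith, by linarith⟩
  exact absurd (key ε hε) (by linarith)

end StmtAux2

namespace StmtAux3
variable {X : Type*} [NormedAddCommGroup X] [NormedSpace ℝ X]

lemma bounded_on_ball_of_uc {h : X → ℝ} {r : ℝ} (hr : 0 ≤ r)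
    (huc : UniformContinuousOn h (Metric.closedBall 0 r)) :
    ∃ B : ℝ, 0 ≤ B ∧ ∀ x : X, ‖x‖ ≤ r → |h x| ≤ B := by
  obtain ⟨δ, hδ, hucδ⟩ := Metric.uniformContinuousOn_iff.mp huc 1 one_pos
  set δ' : ℝ := δ / 2 with hδ'def
  have hδ' : 0 < δ' := by positivity
  have key : ∀ n : ℕ, ∀ x : X, ‖x‖ ≤ r → ‖x‖ ≤ n * δ' → |h x - h 0| ≤ n := by
    intro n
    induction n with
    | zero =>
      intro x _ hx
      simp only [Nat.cast_zero, zero_mul] at hx ⊢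
      have : x = 0 := by
        rw [← norm_le_zero_iff]; exact hx
      simp [this]
    | succ n ih =>
      intro x hxr hx
      have step : ∀ u v : X, ‖u‖ ≤ r → ‖v‖ ≤ r → ‖u - v‖ ≤ δ' → |h u - h v| ≤ 1 := by
        intro u v hu hv huv
        have := hucδ u (by simpa [Metric.mem_closedBall, dist_zero_right] using hu)
          v (by simpa [Metric.mem_closedBall, dist_zero_right] using hv)
          (by rw [dist_eq_norm]; linarith)
        rw [Real.dist_eq] at this
        exact this.le
      by_cases hsmall : ‖x‖ ≤ δ'
      · have h1 : |h x - h 0| ≤ 1 := step x 0 hxr (by simpa using hr) (by simpa using hsmall)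
        have : (1 : ℝ) ≤ (n : ℝ) + 1 := by have : (0:ℝ) ≤ n := Nat.cast_nonneg n; linarith
        calc |h x - h 0| ≤ 1 := h1
          _ ≤ (n : ℝ) + 1 := this
          _ = ((n + 1 : ℕ) : ℝ) := by push_cast; ring
      · push_neg at hsmall
        have hxpos : 0 < ‖x‖ := lt_trans hδ' hsmall
        set y : X := (1 - δ' / ‖x‖) • x with hydef
        have hsc : 0 ≤ 1 - δ' / ‖x‖ := by
          rw [sub_nonneg, div_le_one hxpos]; exact hsmall.le
        have hyn : ‖y‖ = ‖x‖ - δ' := by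
          rw [hydef, norm_smul, Real.norm_eq_abs, abs_of_nonneg hsc]
          field_simp
        have hxy : ‖x - y‖ = δ' := by
          have : x - y = (δ' / ‖x‖) • x := by
            rw [hydef]; module
          rw [this, norm_smul, Real.norm_eq_abs, abs_of_pos (by positivity)]
          field_simp
        have h1 : |h x - h y| ≤ 1 := step x y hxr (by rw [hyn]; linarith) (le_of_eq hxy)
        have h2 : |h y - h 0| ≤ n := by
          refine ih y (by rw [hyn]; linarith) ?_
          rw [hyn]
          have : ‖x‖ ≤ ((n : ℝ) + 1) * δ' := by
            calc ‖x‖ ≤ ((n + 1 : ℕ) : ℝ) * δ' := hx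
              _ = ((n : ℝ) + 1) * δ' := by push_cast; ring
          linarith
        calc |h x - h 0| = |(h x - h y) + (h y - h 0)| := by ring_nf
          _ ≤ |h x - h y| + |h y - h 0| := abs_add_le _ _
          _ ≤ 1 + n := add_le_add h1 h2
          _ = ((n + 1 : ℕ) : ℝ) := by push_cast; ring
  set n : ℕ := ⌈r / δ'⌉₊ with hndef
  have hrn : r ≤ n * δ' := by
    rw [← div_le_iff₀ hδ']
    exact Nat.le_ceil _
  refine ⟨|h 0| + n, by positivity, fun x hx => ?_⟩
  have := key n x hx (hx.trans hrn)
  calc |h x| = |h 0 + (h x - h 0)| := by ring_nf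
    _ ≤ |h 0| + |h x - h 0| := abs_add_le _ _
    _ ≤ |h 0| + n := by linarith

end StmtAux3

namespace StmtAux4
variable {X : Type*} [NormedAddCommGroup X] [NormedSpace ℝ X]

lemma seconddiff_bound {c : X → ℝ} (hcdiff : Differentiable ℝ c)
    {α L ρ : ℝ} (hα0 : 0 < α) (hα1 : α ≤ 1) (hL0 : 0 ≤ L)
    (hL : ∀ x y : X, ‖x‖ ≤ ρ → ‖y‖ ≤ ρ →
      ‖fderiv ℝ c x - fderiv ℝ c y‖ ≤ L * ‖x - y‖ ^ α)
    {z w : X} (hz : ‖z‖ + ‖w‖ ≤ ρ) :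
    c (z + w) + c (z - w) - 2 * c z ≤ 2 * L * ‖w‖ ^ (1 + α) := by
  set φ : ℝ → ℝ := fun t => c (z + t • w) + c (z - t • w) with hφdef
  set φ' : ℝ → ℝ := fun t =>
    (fderiv ℝ c (z + t • w)) w - (fderiv ℝ c (z - t • w)) w with hφ'def
  have hmem : ∀ t : ℝ, 0 ≤ t → t ≤ 1 → ‖z + t • w‖ ≤ ρ ∧ ‖z - t • w‖ ≤ ρ := by
    intro t ht0 ht1
    have hn : ‖t • w‖ ≤ ‖w‖ := by
      rw [norm_smul, Real.norm_eq_abs, abs_of_nonneg ht0]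
      nlinarith [norm_nonneg w]
    constructor
    · calc ‖z + t • w‖ ≤ ‖z‖ + ‖t • w‖ := norm_add_le _ _
        _ ≤ ρ := by linarith
    · calc ‖z - t • w‖ ≤ ‖z‖ + ‖t • w‖ := norm_sub_le _ _
        _ ≤ ρ := by linarith
  have hderiv : ∀ t ∈ Set.Icc (0:ℝ) 1, HasDerivWithinAt φ (φ' t) (Set.Icc (0:ℝ) 1) t := by
    intro t _
    have h1 : HasDerivAt (fun t : ℝ => z + t • w) w t := by
      simpa using ((hasDerivAt_id t).smul_const w).const_add z
    have h2 : HasDerivAt (fun t : ℝ => z - t • w) (-w) t := by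
      have : HasDerivAt (fun t : ℝ => z + -(t • w)) (-w) t := by
        simpa using (((hasDerivAt_id t).smul_const w).neg).const_add z
      simpa [sub_eq_add_neg] using this
    have hc1 := (hcdiff (z + t • w)).hasFDerivAt.comp_hasDerivAt t h1
    have hc2 := (hcdiff (z - t • w)).hasFDerivAt.comp_hasDerivAt t h2
    have := hc1.add hc2
    simp only [map_neg] at this
    exact (this.congr_deriv (by ring)).hasDerivWithinAt
  have hbound : ∀ t ∈ Set.Ico (0:ℝ) 1, ‖φ' t‖ ≤ 2 * L * ‖w‖ ^ (1 + α) := by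
    intro t ⟨ht0, ht1⟩
    obtain ⟨hm1, hm2⟩ := hmem t ht0 ht1.le
    have hdiff : ‖fderiv ℝ c (z + t • w) - fderiv ℝ c (z - t • w)‖ ≤
        L * ‖(2 * t) • w‖ ^ α := by
      have := hL (z + t • w) (z - t • w) hm1 hm2
      have he : z + t • w - (z - t • w) = (2 * t) • w := by module
      rwa [he] at this
    have hsc : ‖(2 * t) • w‖ ^ α ≤ 2 ^ α * ‖w‖ ^ α := by
      rw [norm_smul, Real.norm_eq_abs, abs_of_nonneg (by linarith)]
      rw [Real.mul_rpow (by linarith) (norm_nonneg w)]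
      exact mul_le_mul_of_nonneg_right
        (Real.rpow_le_rpow (by linarith) (by linarith) hα0.le)
        (Real.rpow_nonneg (norm_nonneg w) α)
    have h2a : (2:ℝ) ^ α ≤ 2 := by
      calc (2:ℝ) ^ α ≤ 2 ^ (1:ℝ) := Real.rpow_le_rpow_of_exponent_le one_le_two hα1
        _ = 2 := Real.rpow_one 2
    calc ‖φ' t‖ = ‖(fderiv ℝ c (z + t • w) - fderiv ℝ c (z - t • w)) w‖ := by
          simp [φ'
          ]
      _ ≤ ‖fderiv ℝ c (z + t • w) - fderiv ℝ c (z - t • w)‖ * ‖w‖ :=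
          ContinuousLinearMap.le_opNorm _ _
      _ ≤ L * (2 ^ α * ‖w‖ ^ α) * ‖w‖ := by
          refine mul_le_mul (hdiff.trans ?_) le_rfl (norm_nonneg w) (by positivity)
          exact mul_le_mul_of_nonneg_left hsc hL0
      _ ≤ 2 * L * ‖w‖ ^ (1 + α) := by
          rw [Real.rpow_add' (norm_nonneg w) (by linarith), Real.rpow_one]
          nlinarith [Real.rpow_nonneg (norm_nonneg w) α, norm_nonneg w,
            mul_le_mul_of_nonneg_right h2a (mul_nonneg hL0 (mul_nonneg
              (Real.rpow_nonneg (norm_nonneg w) α) (norm_nonneg w)))]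
  have := norm_image_sub_le_of_norm_deriv_le_segment' hderiv hbound 1
    (Set.right_mem_Icc.2 zero_le_one)
  rw [Real.norm_eq_abs] at this
  have hφ1 : φ 1 = c (z + w) + c (z - w) := by simp [φ]
  have hφ0 : φ 0 = 2 * c z := by simp [φ]; ring
  have habs := (abs_le.mp (by simpa using this)).2
  rw [hφ1, hφ0] at habs
  linarith [habs]

end StmtAux4

namespace StmtAux5
variable {X : Type*} [NormedAddCommGroup X] [NormedSpace ℝ X]

lemma exists_subgradient {f : X → ℝ}
    (hconv : ∀ (x y : X) (a b : ℝ), 0 ≤ a → 0 ≤ b → a + b = 1 →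
      f (a • x + b • y) ≤ a * f x + b * f y)
    (husc : ∀ (x : X) (ε : ℝ), 0 < ε → ∃ δ > 0, ∀ y, ‖y - x‖ < δ → f y < f x + ε)
    (x : X) : ∃ G : X →L[ℝ] ℝ, ∀ y, f x + G (y - x) ≤ f y := by
  set s : Set (X × ℝ) := {p | f p.1 < p.2} with hsdef
  have hsconv : Convex ℝ s := by
    rintro ⟨y, t⟩ hyt ⟨y', t'⟩ hy't' a b ha hb hab
    simp only [hsdef, Set.mem_setOf_eq] at hyt hy't' ⊢
    have h1 : f (a • y + b • y') ≤ a * f y + b * f y' := hconv y y' a b ha hb hab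
    have h2 : a * f y + b * f y' < a * t + b * t' := by
      rcases eq_or_lt_of_le ha with rfl | ha'
      · simp only [zero_add] at hab; subst hab; simpa using hy't'
      rcases eq_or_lt_of_le hb with rfl | hb'
      · simp only [add_zero] at hab; subst hab; simpa using hyt
      have := mul_lt_mul_of_pos_left hyt ha'
      have := mul_lt_mul_of_pos_left hy't' hb'
      linarith
    exact lt_of_le_of_lt h1 h2
  have hsopen : IsOpen s := by
    rw [isOpen_iff_mem_nhds]
    rintro ⟨y, t⟩ hyt
    simp only [hsdef, Set.mem_setOf_eq] at hyt
    set ε : ℝ := (t - f y) / 2 with hεdef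
    have hε : 0 < ε := by simp only [hεdef]; linarith
    obtain ⟨δ, hδ, hδp⟩ := husc y ε hε
    rw [mem_nhds_prod_iff']
    refine ⟨Metric.ball y δ, Metric.ball t ε, Metric.isOpen_ball, by simpa using hδ,
      Metric.isOpen_ball, by simpa using hε, ?_⟩
    rintro ⟨y', t'⟩ ⟨hy', ht'⟩
    simp only [Metric.mem_ball, dist_eq_norm, Real.dist_eq] at hy' ht'
    simp only [hsdef, Set.mem_setOf_eq]
    have h1 : f y' < f y + ε := hδp y' hy'
    have h2 : t - ε < t' := by
      have := abs_lt.mp ht'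
      linarith [this.1]
    have : f y + ε = t - ε := by simp only [hεdef]; ring
    linarith
  have hxs : (x, f x) ∉ s := by simp [hsdef]
  obtain ⟨φ, hφ⟩ := geometric_hahn_banach_open_point hsconv hsopen hxs
  set β : ℝ := φ (0, 1) with hβdef
  have hsplit : ∀ (y : X) (t : ℝ), φ (y, t) = φ (y, 0) + t * β := by
    intro y t
    have : (y, t) = (y, (0:ℝ)) + t • ((0:X), (1:ℝ)) := by
      simp [Prod.ext_iff]
    rw [this, map_add, map_smul]
    simp [hβdef]
  have hβneg : β < 0 := by
    have h1 : ((x, f x + 1) : X × ℝ) ∈ s := by simp [hsdef]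
    have := hφ _ h1
    rw [hsplit x (f x + 1), hsplit x (f x)] at this
    nlinarith
  have hkey : ∀ y : X, φ (y, 0) + f y * β ≤ φ (x, 0) + f x * β := by
    intro y
    refine le_of_forall_pos_le_add fun ε' hε' => ?_
    set ε : ℝ := ε' / (-β) with hεdef
    have hε : 0 < ε := div_pos hε' (by linarith)
    have h1 : ((y, f y + ε) : X × ℝ) ∈ s := by simp [hsdef, hε]
    have h2 := hφ _ h1
    rw [hsplit y (f y + ε), hsplit x (f x)] at h2
    have hεβ : ε * β = -ε' := by
      rw [hεdef]
      field_simp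
      rw [div_self (by linarith : β ≠ 0)]
    nlinarith
  set G : X →L[ℝ] ℝ := (-β)⁻¹ • (φ.comp (ContinuousLinearMap.inl ℝ X ℝ)) with hGdef
  refine ⟨G, fun y => ?_⟩
  have hGval : G (y - x) = (-β)⁻¹ * (φ (y, 0) - φ (x, 0)) := by
    simp only [hGdef, ContinuousLinearMap.smul_apply, ContinuousLinearMap.comp_apply,
      ContinuousLinearMap.inl_apply, smul_eq_mul]
    congr 1
    rw [← map_sub]
    congr 1
    simp [Prod.ext_iff]
  rw [hGval]
  have hβ' : 0 < -β := by linarith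
  have h3 : φ (y, 0) - φ (x, 0) ≤ (f x - f y) * β := by
    have := hkey y; nlinarith
  have h4 : (-β)⁻¹ * (φ (y, 0) - φ (x, 0)) ≤ (-β)⁻¹ * ((f x - f y) * β) :=
    mul_le_mul_of_nonneg_left h3 (by positivity)
  have h5 : (-β)⁻¹ * ((f x - f y) * β) = f y - f x := by
    rw [inv_mul_eq_div, div_eq_iff (by linarith)]
    ring
  linarith [h4, h5.symm ▸ h4]

end StmtAux5
set_option maxHeartbeats 1000000 in
/-- Let `c : X → ℝ` be Fréchet differentiable with derivative `α`-Hölder continuous on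
every bounded subset of `X` (`0 < α ≤ 1`), let `d : X → ℝ` be continuous and convex, and
set `h := c - d`. If `h` is uniformly continuous on bounded sets and strongly coercive,
then `co h` is Fréchet differentiable with derivative `α`-Hölder continuous on every
bounded subset of `X`. -/
theorem stmt_12 {X : Type*} [NormedAddCommGroup X] [NormedSpace ℝ X] [CompleteSpace X]
    (α : ℝ) (hα0 : 0 < α) (hα1 : α ≤ 1)
    (c d : X → ℝ)
    (hcdiff : Differentiable ℝ c)
    (hchold : ∀ r : ℝ, 0 < r → ∃ L : ℝ, 0 < L ∧ ∀ x y : X, ‖x‖ ≤ r → ‖y‖ ≤ r →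
      ‖fderiv ℝ c x - fderiv ℝ c y‖ ≤ L * ‖x - y‖ ^ α)
    (hdcont : Continuous d)
    (hdconv : ConvexOn ℝ Set.univ d)
    (hucb : ∀ s : Set X, Bornology.IsBounded s →
      UniformContinuousOn (fun x => c x - d x) s)
    (hcoer : ∀ M : ℝ, ∃ R : ℝ, ∀ x : X, R ≤ ‖x‖ → M ≤ (c x - d x) / ‖x‖) :
    Differentiable ℝ (convEnv (fun x => c x - d x)) ∧
    ∀ r : ℝ, 0 < r → ∃ L : ℝ, 0 < L ∧ ∀ x y : X, ‖x‖ ≤ r → ‖y‖ ≤ r →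
      ‖fderiv ℝ (convEnv (fun x => c x - d x)) x -
        fderiv ℝ (convEnv (fun x => c x - d x)) y‖ ≤ L * ‖x - y‖ ^ α := by
  classical
  open StmtAux StmtAux2 StmtAux3 StmtAux4 StmtAux5 in
  set h : X → ℝ := fun x => c x - d x with hhdef
  set f : X → ℝ := convEnv h with hfdef
  have hh : ∀ t, h t = c t - d t := fun _ => rfl
  -- Step A : affine minorant
  obtain ⟨C₁, hC₁0, hC⟩ : ∃ C₁ : ℝ, 0 ≤ C₁ ∧ ∀ z : X, ‖z‖ - C₁ ≤ h z := by
    obtain ⟨R, hR⟩ := hcoer 1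
    set R' : ℝ := max R 1 with hR'def
    have hR'1 : 1 ≤ R' := le_max_right R 1
    obtain ⟨B, hB0, hB⟩ := StmtAux3.bounded_on_ball_of_uc (r := R') (by linarith)
      (hucb (Metric.closedBall 0 R') Metric.isBounded_closedBall)
    refine ⟨R' + B, by linarith, fun z => ?_⟩
    by_cases hz : ‖z‖ ≤ R'
    · have := (abs_le.mp (hB z hz)).1
      simp only [hhdef] at this ⊢
      linarith
    · push_neg at hz
      have hz0 : 0 < ‖z‖ := by linarith
      have h1 : 1 ≤ h z / ‖z‖ := hR z (by simp only [hR'def] at hz; exact (le_max_left R 1).trans hz.le)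
      have h2 : ‖z‖ ≤ h z := by
        rwa [le_div_iff₀ hz0, one_mul] at h1
      linarith
  -- Step B : bounded on balls
  have hbdd : ∀ r : ℝ, 0 < r → ∃ B : ℝ, 0 ≤ B ∧ ∀ x : X, ‖x‖ ≤ r → |h x| ≤ B := by
    intro r hr
    exact StmtAux3.bounded_on_ball_of_uc hr.le
      (hucb (Metric.closedBall 0 r) Metric.isBounded_closedBall)
  -- Step D : shifted combination estimate
  have hshift : ∀ r : ℝ, 0 < r → ∃ ρ : ℝ, 1 ≤ ρ ∧ ∀ x : X, ‖x‖ ≤ r →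
      ∀ ε : ℝ, 0 < ε → ε ≤ 1 →
      ∃ (m : ℕ) (l : Fin m → ℝ) (z : Fin m → X) (ν : ℝ),
        (∀ i, 0 < l i) ∧ (∑ i, l i = 1) ∧
        (∑ i, l i * h (z i)) ≤ f x + ε ∧ (1/2 ≤ ν) ∧ ν ≤ 1 ∧
        (∀ v : X, f (x + v) ≤ (∑ i, l i * h (z i)) +
          ∑ i, (if ‖z i‖ ≤ ρ then l i * (h (z i + ν⁻¹ • v) - h (z i)) else 0)) := by
    intro r hr
    obtain ⟨B, hB0, hB⟩ := hbdd r hr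
    set ρ : ℝ := max 1 (2 * (B + 1 + C₁)) with hρdef
    have hρ1 : 1 ≤ ρ := le_max_left _ _
    have hρ2 : 2 * (B + 1 + C₁) ≤ ρ := le_max_right _ _
    refine ⟨ρ, hρ1, fun x hx ε hε hε1 => ?_⟩
    obtain ⟨m, l, z, hpos, hs1, hsx, hval⟩ := StmtAux.exists_combo hC x hε
    have hfx : convEnv h x = f x := rfl
    rw [hfx] at hval
    set P : Fin m → Prop := fun i => ‖z i‖ ≤ ρ with hPdef
    set ν : ℝ := ∑ i, if P i then l i else 0 with hνdef
    set μ : ℝ := ∑ i, if P i then (0:ℝ) else l i with hμdef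
    have hν0 : 0 ≤ ν := Finset.sum_nonneg fun i _ => by
      by_cases hPi : P i <;> simp [hPi, (hpos i).le]
    have hμ0 : 0 ≤ μ := Finset.sum_nonneg fun i _ => by
      by_cases hPi : P i <;> simp [hPi, (hpos i).le]
    have hνμ : ν + μ = 1 := by
      rw [hνdef, hμdef, ← Finset.sum_add_distrib, ← hs1]
      refine Finset.sum_congr rfl fun i _ => ?_
      by_cases hPi : P i <;> simp [hPi]
    have hfxB : f x ≤ B := by
      have h1 : f x ≤ h x := StmtAux.convEnv_le_self hC x
      have h2 := (abs_le.mp (hB x hx)).2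
      linarith
    have hμhalf : μ ≤ 1/2 := by
      have hstep1 : ρ * μ ≤ ∑ i, l i * ‖z i‖ := by
        rw [hμdef, Finset.mul_sum]
        refine Finset.sum_le_sum fun i _ => ?_
        by_cases hPi : P i
        · simp only [hPi, if_true, mul_zero]
          exact mul_nonneg (hpos i).le (norm_nonneg _)
        · simp only [hPi, if_false]
          have : ρ < ‖z i‖ := by
            simp only [hPdef] at hPi; push_neg at hPi; exact hPi
          nlinarith [(hpos i).le, hpos i]
      have hstep2 : ∑ i, l i * ‖z i‖ ≤ (∑ i, l i * h (z i)) + C₁ := by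
        have : ∑ i, l i * ‖z i‖ ≤ ∑ i, (l i * h (z i) + l i * C₁) := by
          refine Finset.sum_le_sum fun i _ => ?_
          have := hC (z i)
          nlinarith [(hpos i).le]
        rw [Finset.sum_add_distrib, ← Finset.sum_mul, hs1, one_mul] at this
        exact this
      have hQ : ρ * μ ≤ B + 1 + C₁ := by
        have := hval.le
        linarith
      nlinarith [mul_le_mul_of_nonneg_right hρ2 hμ0]
    have hνhalf : 1/2 ≤ ν := by linarith
    have hν1 : ν ≤ 1 := by linarith
    refine ⟨m, l, z, ν, hpos, hs1, hval.le, hνhalf, hν1, fun v => ?_⟩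
    set w : X := ν⁻¹ • v with hwdef
    have hνne : ν ≠ 0 := by linarith
    set z' : Fin m → X := fun i => if P i then z i + w else z i with hz'def
    have hsum' : ∑ i, l i • z' i = x + v := by
      have e1 : ∀ i, l i • z' i = l i • z i + (if P i then l i else 0) • w := by
        intro i
        by_cases hPi : P i <;> simp [hz'def, hPi, smul_add]
      rw [Finset.sum_congr rfl fun i _ => e1 i, Finset.sum_add_distrib, hsx,
        ← Finset.sum_smul, ← hνdef, hwdef, smul_smul, mul_inv_cancel₀ hνne, one_smul]
    have hmem : (∑ i, l i * h (z' i)) ∈ StmtAux.envSet h (x + v) :=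
      ⟨m, l, z', hpos, hs1, hsum', rfl⟩
    have hle : f (x + v) ≤ ∑ i, l i * h (z' i) :=
      StmtAux.convEnv_le_of_mem hC hmem
    refine hle.trans (le_of_eq ?_)
    rw [← Finset.sum_add_distrib]
    refine Finset.sum_congr rfl fun i _ => ?_
    by_cases hPi : P i
    · have : ‖z i‖ ≤ ρ := hPi
      simp only [hz'def, hPi, if_true, this]
      ring
    · have : ¬ (‖z i‖ ≤ ρ) := hPi
      simp only [hz'def, hPi, if_false, this]
      ring
  -- Step E : second difference estimate for f
  have hkey : ∀ r : ℝ, 0 < r → ∃ K : ℝ, 0 < K ∧ ∀ x v : X, ‖x‖ ≤ r → ‖v‖ ≤ r →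
      f (x + v) + f (x - v) - 2 * f x ≤ K * ‖v‖ ^ (1 + α) := by
    intro r hr
    obtain ⟨ρ, hρ1, hsh⟩ := hshift r hr
    obtain ⟨L, hL0, hL⟩ := hchold (ρ + 2*r) (by linarith)
    refine ⟨8*L, by linarith, fun x v hx hv => ?_⟩
    have main : ∀ ε : ℝ, 0 < ε → ε ≤ 1 →
        f (x + v) + f (x - v) - 2 * f x ≤ 8*L*‖v‖^(1+α) + 2*ε := by
      intro ε hε hε1
      obtain ⟨m, l, z, ν, hpos, hs1, hval, hν2, hν1, hsh2⟩ := hsh x hx ε hε hε1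
      have hν0 : 0 < ν := by linarith
      have h1 := hsh2 v
      have h2 := hsh2 (-v)
      have hνinv : ν⁻¹ ≤ 2 := by
        rw [show (2:ℝ) = (1/2:ℝ)⁻¹ by norm_num]
        exact inv_anti₀ (by norm_num) hν2
      have hwnorm : ‖ν⁻¹ • v‖ ≤ 2 * ‖v‖ := by
        rw [norm_smul, Real.norm_eq_abs, abs_of_pos (inv_pos.mpr hν0)]
        nlinarith [norm_nonneg v]
      have hw4 : ‖ν⁻¹ • v‖^(1+α) ≤ 4 * ‖v‖^(1+α) := by
        have hexp : 0 ≤ 1 + α := by linarith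
        calc ‖ν⁻¹ • v‖^(1+α) ≤ (2*‖v‖)^(1+α) :=
              Real.rpow_le_rpow (norm_nonneg _) hwnorm hexp
          _ = 2^(1+α) * ‖v‖^(1+α) := Real.mul_rpow (by norm_num) (norm_nonneg v)
          _ ≤ 4 * ‖v‖^(1+α) := by
              have h24 : (2:ℝ)^(1+α) ≤ 4 := by
                have e1 : (2:ℝ)^(1+α) ≤ 2^((2:ℕ):ℝ) :=
                  Real.rpow_le_rpow_of_exponent_le one_le_two (by push_cast; linarith)
                have e2 : (2:ℝ)^((2:ℕ):ℝ) = 4 := by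
                  rw [Real.rpow_natCast]; norm_num
                linarith
              have := Real.rpow_nonneg (norm_nonneg v) (1+α)
              nlinarith
      have hterm : ∀ i : Fin m,
          (if ‖z i‖ ≤ ρ then l i * (h (z i + ν⁻¹ • v) - h (z i)) else 0)
          + (if ‖z i‖ ≤ ρ then l i * (h (z i + ν⁻¹ • (-v)) - h (z i)) else 0)
          ≤ l i * (8 * L * ‖v‖^(1+α)) := by
        intro i
        by_cases hPi : ‖z i‖ ≤ ρ
        · simp only [hPi, if_true]
          have hzw : ‖z i‖ + ‖ν⁻¹ • v‖ ≤ ρ + 2*r := by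
            have : 2*‖v‖ ≤ 2*r := by linarith
            linarith [hwnorm]
          have hsd := StmtAux4.seconddiff_bound hcdiff hα0 hα1 hL0.le hL hzw
          have hdc : 2 * d (z i) ≤ d (z i + ν⁻¹ • v) + d (z i - ν⁻¹ • v) := by
            have heq : (1/2 : ℝ) • (z i + ν⁻¹ • v) + (1/2 : ℝ) • (z i - ν⁻¹ • v) = z i := by
              module
            have := hdconv.2 (Set.mem_univ (z i + ν⁻¹ • v)) (Set.mem_univ (z i - ν⁻¹ • v))
              (by norm_num : (0:ℝ) ≤ 1/2) (by norm_num : (0:ℝ) ≤ 1/2) (by norm_num)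
            rw [heq] at this
            simp only [smul_eq_mul] at this
            linarith
          have hsd2 : h (z i + ν⁻¹ • v) + h (z i - ν⁻¹ • v) - 2 * h (z i)
              ≤ 2*L*‖ν⁻¹ • v‖^(1+α) := by
            simp only [hh]
            linarith
          have hneg : z i + ν⁻¹ • (-v) = z i - ν⁻¹ • v := by
            rw [smul_neg]; abel
          rw [hneg]
          have hchain : h (z i + ν⁻¹ • v) - h (z i) + (h (z i - ν⁻¹ • v) - h (z i))
              ≤ 8 * L * ‖v‖^(1+α) := by nlinarith
          nlinarith [mul_le_mul_of_nonneg_left hchain (hpos i).le]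
        · simp only [hPi, if_false]
          have : 0 ≤ l i * (8 * L * ‖v‖^(1+α)) := by
            have := Real.rpow_nonneg (norm_nonneg v) (1+α)
            have := (hpos i).le
            positivity
          linarith
      have hsumterm :
          (∑ i, (if ‖z i‖ ≤ ρ then l i * (h (z i + ν⁻¹ • v) - h (z i)) else 0))
          + (∑ i, (if ‖z i‖ ≤ ρ then l i * (h (z i + ν⁻¹ • (-v)) - h (z i)) else 0))
          ≤ 8 * L * ‖v‖^(1+α) := by
        rw [← Finset.sum_add_distrib]
        calc (∑ i, ((if ‖z i‖ ≤ ρ then l i * (h (z i + ν⁻¹ • v) - h (z i)) else 0)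
              + (if ‖z i‖ ≤ ρ then l i * (h (z i + ν⁻¹ • (-v)) - h (z i)) else 0)))
            ≤ ∑ i, l i * (8 * L * ‖v‖^(1+α)) := Finset.sum_le_sum fun i _ => hterm i
          _ = 8 * L * ‖v‖^(1+α) := by rw [← Finset.sum_mul, hs1, one_mul]
      have hneg2 : x + (-v) = x - v := by abel
      rw [hneg2] at h2
      linarith
    refine le_of_forall_pos_le_add fun ε' hε' => ?_
    have hmin : 0 < min (ε'/2) 1 := by positivity
    have := main (min (ε'/2) 1) hmin (min_le_right _ _)
    have h2 : 2 * min (ε'/2) 1 ≤ ε' := by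
      have := min_le_left (ε'/2) 1
      linarith
    linarith
  -- Step F : upper semicontinuity of f
  have husc : ∀ (x : X) (ε : ℝ), 0 < ε → ∃ δ > 0, ∀ y, ‖y - x‖ < δ → f y < f x + ε := by
    intro x ε hε
    have hr : (0:ℝ) < ‖x‖ + 1 := by positivity
    obtain ⟨ρ, hρ1, hsh⟩ := hshift (‖x‖+1) hr
    have hucρ := hucb (Metric.closedBall 0 (ρ+2)) Metric.isBounded_closedBall
    obtain ⟨δ₀, hδ₀, hd0⟩ := Metric.uniformContinuousOn_iff.mp hucρ (ε/4) (by positivity)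
    refine ⟨min (δ₀/2) 1, by positivity, fun y hy => ?_⟩
    have hε'0 : 0 < min (ε/4) 1 := by positivity
    obtain ⟨m, l, z, ν, hpos, hs1, hval, hν2, hν1, hsh2⟩ :=
      hsh x (by linarith) (min (ε/4) 1) hε'0 (min_le_right _ _)
    have h1 := hsh2 (y - x)
    have hxy : x + (y - x) = y := by abel
    rw [hxy] at h1
    have hν0 : 0 < ν := by linarith
    have hνinv : ν⁻¹ ≤ 2 := by
      rw [show (2:ℝ) = (1/2:ℝ)⁻¹ by norm_num]
      exact inv_anti₀ (by norm_num) hν2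
    have hwnorm : ‖ν⁻¹ • (y - x)‖ ≤ 2 * ‖y - x‖ := by
      rw [norm_smul, Real.norm_eq_abs, abs_of_pos (inv_pos.mpr hν0)]
      nlinarith [norm_nonneg (y - x)]
    have hwsmall : ‖ν⁻¹ • (y - x)‖ < min δ₀ 2 := by
      have h2 : ‖y - x‖ < min (δ₀/2) 1 := hy
      have := min_le_left (δ₀/2) 1
      have := min_le_right (δ₀/2) 1
      rcases le_or_gt δ₀ 2 with hc | hc
      · rw [min_eq_left hc]
        calc ‖ν⁻¹ • (y - x)‖ ≤ 2 * ‖y - x‖ := hwnorm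
          _ < 2 * min (δ₀/2) 1 := by nlinarith [norm_nonneg (y - x)]
          _ ≤ δ₀ := by
              have := min_le_left (δ₀/2) 1; linarith
      · rw [min_eq_right hc.le]
        calc ‖ν⁻¹ • (y - x)‖ ≤ 2 * ‖y - x‖ := hwnorm
          _ < 2 * min (δ₀/2) 1 := by nlinarith [norm_nonneg (y - x)]
          _ ≤ 2 := by
              have := min_le_right (δ₀/2) 1; linarith
    have hterm : ∀ i : Fin m,
        (if ‖z i‖ ≤ ρ then l i * (h (z i + ν⁻¹ • (y - x)) - h (z i)) else 0)
          ≤ l i * (ε/4) := by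
      intro i
      by_cases hPi : ‖z i‖ ≤ ρ
      · simp only [hPi, if_true]
        have hm1 : z i ∈ Metric.closedBall (0:X) (ρ+2) := by
          simp only [Metric.mem_closedBall, dist_zero_right]
          linarith
        have hm2 : z i + ν⁻¹ • (y - x) ∈ Metric.closedBall (0:X) (ρ+2) := by
          simp only [Metric.mem_closedBall, dist_zero_right]
          have := norm_add_le (z i) (ν⁻¹ • (y - x))
          have h3 : ‖ν⁻¹ • (y - x)‖ < 2 := lt_of_lt_of_le hwsmall (min_le_right _ _)
          linarith
        have hdist : dist (z i + ν⁻¹ • (y - x)) (z i) < δ₀ := by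
          rw [dist_eq_norm]
          have h3 : ‖ν⁻¹ • (y - x)‖ < δ₀ := lt_of_lt_of_le hwsmall (min_le_left _ _)
          simpa using h3
        have := hd0 _ hm2 _ hm1 hdist
        rw [Real.dist_eq] at this
        have h4 : h (z i + ν⁻¹ • (y - x)) - h (z i) ≤ ε/4 := by
          have := (abs_lt.mp (by simpa [hh] using this)).2
          simp only [hh] at *
          linarith
        nlinarith [(hpos i).le, h4, hε]
      · simp only [hPi, if_false]
        have := (hpos i).le
        positivity
    have hsum : (∑ i, (if ‖z i‖ ≤ ρ then l i * (h (z i + ν⁻¹ • (y - x)) - h (z i)) else 0))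
        ≤ ε/4 := by
      calc (∑ i, (if ‖z i‖ ≤ ρ then l i * (h (z i + ν⁻¹ • (y - x)) - h (z i)) else 0))
          ≤ ∑ i, l i * (ε/4) := Finset.sum_le_sum fun i _ => hterm i
        _ = ε/4 := by rw [← Finset.sum_mul, hs1, one_mul]
    have hε'le : min (ε/4) 1 ≤ ε/4 := min_le_left _ _
    calc f y ≤ (∑ i, l i * h (z i)) +
          ∑ i, (if ‖z i‖ ≤ ρ then l i * (h (z i + ν⁻¹ • (y - x)) - h (z i)) else 0) := h1
      _ ≤ f x + min (ε/4) 1 + ε/4 := by linarith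
      _ < f x + ε := by linarith
  -- Step G/H : subgradients
  have hsub : ∀ x : X, ∃ G : X →L[ℝ] ℝ, ∀ y, f x + G (y - x) ≤ f y := by
    refine fun x => StmtAux5.exists_subgradient (fun x y a b ha hb hab => ?_) husc x
    simpa using StmtAux2.convEnv_convex2 hC (x := x) (y := y) ha hb hab
  -- Step I : differentiability
  have hupper : ∀ (R : ℝ), 0 < R → ∃ K : ℝ, 0 < K ∧ ∀ x : X, ‖x‖ ≤ R →
      ∀ v : X, ‖v‖ ≤ R → ∀ G : X →L[ℝ] ℝ, (∀ y, f x + G (y - x) ≤ f y) →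
      0 ≤ f (x + v) - f x - G v ∧ f (x + v) - f x - G v ≤ K * ‖v‖^(1+α) := by
    intro R hR
    obtain ⟨K, hK0, hK⟩ := hkey R hR
    refine ⟨K, hK0, fun x hx v hv G hG => ?_⟩
    constructor
    · have := hG (x + v)
      have e : x + v - x = v := by abel
      rw [e] at this
      linarith
    · have hkk := hK x v hx hv
      have h3 := hG (x - v)
      have e : x - v - x = -v := by abel
      rw [e, map_neg] at h3
      linarith
  have hder : ∀ x : X, HasFDerivAt f (Classical.choose (hsub x)) x := by
    intro x
    have hG : ∀ y, f x + (Classical.choose (hsub x)) (y - x) ≤ f y :=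
      Classical.choose_spec (hsub x)
    obtain ⟨K, hK0, hK⟩ := hupper (‖x‖+1) (by positivity)
    rw [hasFDerivAt_iff_isLittleO_nhds_zero, Asymptotics.isLittleO_iff]
    intro C hC'
    have hCK : (0:ℝ) < C/K := by positivity
    have hη : 0 < min (‖x‖+1) ((C/K)^(α⁻¹)) := by
      have := Real.rpow_pos_of_pos hCK α⁻¹
      positivity
    filter_upwards [Metric.ball_mem_nhds (0:X) hη] with v hv
    simp only [Metric.mem_ball, dist_zero_right] at hv
    have hv1 : ‖v‖ ≤ ‖x‖+1 := (lt_of_lt_of_le hv (min_le_left _ _)).le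
    have hv2 : ‖v‖ ≤ (C/K)^(α⁻¹) := (lt_of_lt_of_le hv (min_le_right _ _)).le
    have hva : ‖v‖^α ≤ C/K := by
      calc ‖v‖^α ≤ ((C/K)^(α⁻¹))^α := Real.rpow_le_rpow (norm_nonneg v) hv2 hα0.le
        _ = C/K := Real.rpow_inv_rpow hCK.le hα0.ne'
    obtain ⟨hb1, hb2⟩ := hK x (by linarith) v hv1 _ hG
    have hsplit : ‖v‖^(1+α) = ‖v‖^α * ‖v‖ := by
      rw [add_comm, Real.rpow_add' (norm_nonneg v) (by positivity), Real.rpow_one]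
    rw [Real.norm_eq_abs, abs_of_nonneg hb1]
    calc f (x + v) - f x - (Classical.choose (hsub x)) v ≤ K * ‖v‖^(1+α) := hb2
      _ = K * (‖v‖^α * ‖v‖) := by rw [hsplit]
      _ ≤ K * ((C/K) * ‖v‖) := by
          have := mul_le_mul_of_nonneg_right hva (norm_nonneg v)
          nlinarith
      _ = C * ‖v‖ := by field_simp
  have hdiff : Differentiable ℝ f := fun x => (hder x).differentiableAt
  refine ⟨hdiff, ?_⟩
  -- Step J : Hölder continuity of the derivative
  intro r hr
  obtain ⟨K, hK0, hK⟩ := hupper (5*r) (by linarith)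
  refine ⟨8*K, by linarith, fun x y hx hy => ?_⟩
  have hgsub : ∀ p : X, ∀ y', f p + (fderiv ℝ f p) (y' - p) ≤ f y' := by
    intro p y'
    have := (hder p).fderiv
    rw [this]
    exact Classical.choose_spec (hsub p) y'
  rcases eq_or_lt_of_le (norm_nonneg (x - y)) with ht0 | ht0
  · have hxy : x = y := by
      have : ‖x - y‖ = 0 := ht0.symm
      rwa [norm_sub_eq_zero_iff] at this
    subst hxy
    simp [Real.zero_rpow hα0.ne']
  · -- main case
    set gx := fderiv ℝ f x with hgxdef
    set gy := fderiv ℝ f y with hgydef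
    set t : ℝ := ‖x - y‖ with htdef
    have htr : t ≤ 2*r := by
      calc t ≤ ‖x‖ + ‖y‖ := norm_sub_le x y
        _ ≤ 2*r := by linarith
    have hkey2 : ∀ v : X, ‖v‖ ≤ t → (gx - gy) v ≤ K * 2^(1+α) * t^α * t := by
      intro v hvt
      have h1 : gx v ≤ f (x + v) - f x := by
        have := hgsub x (x + v)
        have e : x + v - x = v := by abel
        rw [e] at this
        linarith
      have h2 : f y + gy (x - y) ≤ f x := hgsub y x
      have h3 : 0 ≤ f (y + (x - y + v)) - f y - gy (x - y + v) ∧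
          f (y + (x - y + v)) - f y - gy (x - y + v) ≤ K * ‖x - y + v‖^(1+α) := by
        refine hK y (by linarith) (x - y + v) ?_ _ (hgsub y)
        have h31 := norm_add_le (x - y) v
        rw [← htdef] at h31
        linarith
      have e2 : y + (x - y + v) = x + v := by abel
      rw [e2] at h3
      have h4 : ‖x - y + v‖^(1+α) ≤ 2^(1+α) * t^(1+α) := by
        have hn : ‖x - y + v‖ ≤ 2*t := by
          calc ‖x - y + v‖ ≤ ‖x - y‖ + ‖v‖ := norm_add_le _ _
            _ ≤ 2*t := by rw [← htdef]; linarith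
        calc ‖x - y + v‖^(1+α) ≤ (2*t)^(1+α) :=
              Real.rpow_le_rpow (norm_nonneg _) hn (by linarith)
          _ = 2^(1+α) * t^(1+α) := Real.mul_rpow (by norm_num) ht0.le
      have h5 : t^(1+α) = t^α * t := by
        rw [add_comm, Real.rpow_add' ht0.le (by positivity), Real.rpow_one]
      have h6 : gy (x - y + v) = gy (x - y) + gy v := by rw [map_add]
      have h7 : (gx - gy) v = gx v - gy v := by simp
      rw [h7]
      have h8 := h3.2
      rw [h6] at h8
      have h9 : K * ‖x - y + v‖^(1+α) ≤ K * 2^(1+α) * t^α * t := by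
        have := mul_le_mul_of_nonneg_left h4 hK0.le
        rw [h5] at this
        nlinarith
      linarith
    refine ContinuousLinearMap.opNorm_le_bound _ (by
      have h2a : (0:ℝ) ≤ 2^(1+α) := Real.rpow_nonneg (by norm_num) _
      have := Real.rpow_nonneg ht0.le α
      positivity) fun u => ?_
    rcases eq_or_ne u 0 with rfl | hu
    · simp
    · have hu0 : 0 < ‖u‖ := norm_pos_iff.mpr hu
      have hscale : ∀ s : ℝ, (gx - gy) (s • u) = s * ((gx - gy) u) := by
        intro s
        rw [map_smul]
        simp
      have habs : |(gx - gy) u| ≤ K * 2^(1+α) * t^α * ‖u‖ := by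
        have hv1 : ‖(t/‖u‖) • u‖ ≤ t := by
          rw [norm_smul, Real.norm_eq_abs, abs_of_pos (by positivity)]
          rw [div_mul_cancel₀ _ hu0.ne']
        have hp := hkey2 _ hv1
        rw [hscale] at hp
        have hv2 : ‖(t/‖u‖) • (-u)‖ ≤ t := by
          rw [norm_smul, Real.norm_eq_abs, abs_of_pos (by positivity), norm_neg]
          rw [div_mul_cancel₀ _ hu0.ne']
        have hm := hkey2 _ hv2
        have : (t/‖u‖) • (-u) = (-(t/‖u‖)) • u := by
          rw [smul_neg, neg_smul]
        rw [this, hscale] at hm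
        rw [abs_le]
        constructor
        · have : -(t/‖u‖ * ((gx - gy) u)) ≤ K * 2^(1+α) * t^α * t := by linarith
          have h10 : -((gx - gy) u) ≤ K * 2^(1+α) * t^α * ‖u‖ := by
            have h11 : -(t/‖u‖ * ((gx - gy) u)) = (t/‖u‖) * (-((gx - gy) u)) := by ring
            rw [h11] at this
            have h12 := mul_le_mul_of_nonneg_left this (le_of_lt hu0)
            have h13 : ‖u‖ * ((t/‖u‖) * (-((gx - gy) u))) = t * (-((gx - gy) u)) := by
              field_simp
            rw [h13] at h12
            nlinarith
          linarith
        · have h10 : (t/‖u‖) * ((gx - gy) u) ≤ K * 2^(1+α) * t^α * t := hp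
          have h12 := mul_le_mul_of_nonneg_left h10 (le_of_lt hu0)
          have h13 : ‖u‖ * ((t/‖u‖) * ((gx - gy) u)) = t * ((gx - gy) u) := by
            field_simp
          rw [h13] at h12
          nlinarith
      have h2a4 : (2:ℝ)^(1+α) ≤ 4 := by
        have e1 : (2:ℝ)^(1+α) ≤ 2^((2:ℕ):ℝ) :=
          Real.rpow_le_rpow_of_exponent_le one_le_two (by push_cast; linarith)
        have e2 : (2:ℝ)^((2:ℕ):ℝ) = 4 := by rw [Real.rpow_natCast]; norm_num
        linarith
      have hta : 0 ≤ t^α := Real.rpow_nonneg ht0.le α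
      calc ‖(gx - gy) u‖ = |(gx - gy) u| := Real.norm_eq_abs _
        _ ≤ K * 2^(1+α) * t^α * ‖u‖ := habs
        _ ≤ 8*K * t^α * ‖u‖ := by
            nlinarith [mul_le_mul_of_nonneg_left (mul_le_mul_of_nonneg_right h2a4
              (mul_nonneg hta (norm_nonneg u))) hK0.le,
              mul_nonneg (mul_nonneg hK0.le hta) (norm_nonneg u)]
        _ = 8*K * ‖x - y‖^α * ‖u‖ := by rw [htdef]
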